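/- If M ⊆ [n]^d is a minimal non-basic subset, then its annihilation function is unique up to a multiplicative constant: any two non-trivial rational-valued annihilation functions of M are proportional (each is a rational scalar multiple of the other). -/

import Mathlib

/-- A finite subset `M ⊆ [n]^d` (the cube identified with `Fin d → Fin n`) is *basic*
if every function on `M` decomposes as a sum of univariate functions. -/
def IsBasic {n d : ℕ} (M : Finset (Fin d → Fin n)) : Prop :=
  ∀ f : (Fin d → Fin n) → ℝ, ∃ g : Fin d → Fin n → ℝ,
    ∀ x ∈ M, f x = ∑ i, g i (x i)

/-- A basic set admits no nontrivial annihilation function: pair the annihilation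
function against the indicator of any point. -/
lemma basic_no_annih {n d : ℕ} (K : Finset (Fin d → Fin n)) (hK : IsBasic K)
    (c : (Fin d → Fin n) → ℚ)
    (hc : ∀ (i : Fin d) (j : Fin n), ∑ x ∈ K.filter (fun x => x i = j), c x = 0) :
    ∀ y ∈ K, c y = 0 := by
  intro y hy
  by_contra hcy
  obtain ⟨g, hg⟩ := hK (fun x => if x = y then 1 else 0)
  have key : ∑ x ∈ K, (c x : ℝ) * (if x = y then 1 else 0) =
      ∑ x ∈ K, (c x : ℝ) * ∑ i, g i (x i) := by
    apply Finset.sum_congr rfl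
    intro x hx
    rw [← hg x hx]
  have lhs : ∑ x ∈ K, (c x : ℝ) * (if x = y then 1 else 0) = (c y : ℝ) := by
    rw [Finset.sum_congr rfl (fun x _ => by rw [mul_ite, mul_one, mul_zero])]
    rw [Finset.sum_ite_eq' K y (fun x => (c x : ℝ))]
    simp [hy]
  have rhs : ∑ x ∈ K, (c x : ℝ) * ∑ i, g i (x i) = 0 := by
    simp_rw [Finset.mul_sum]
    rw [Finset.sum_comm]
    apply Finset.sum_eq_zero
    intro i _
    rw [← Finset.sum_fiberwise K (fun x => x i) (fun x => (c x : ℝ) * g i (x i))]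
    apply Finset.sum_eq_zero
    intro j _
    have : ∑ x ∈ K.filter (fun x => x i = j), (c x : ℝ) * g i (x i)
        = ∑ x ∈ K.filter (fun x => x i = j), (c x : ℝ) * g i j := by
      apply Finset.sum_congr rfl
      intro x hx
      rw [(Finset.mem_filter.mp hx).2]
    rw [this, ← Finset.sum_mul]
    have := hc i j
    have : ((∑ x ∈ K.filter (fun x => x i = j), c x : ℚ) : ℝ) = 0 := by rw [this]; norm_num
    push_cast at this
    rw [this, zero_mul]
  rw [lhs, rhs] at key
  exact hcy (by exact_mod_cast key)

/-- An annihilation function of a minimal non-basic set that vanishes at one point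
vanishes everywhere: its support is a proper subset, hence basic. -/
lemma annih_zero_of_vanish {n d : ℕ} (M : Finset (Fin d → Fin n))
    (hmin : ∀ K ⊂ M, IsBasic K)
    (c : (Fin d → Fin n) → ℚ)
    (hc : ∀ (i : Fin d) (j : Fin n), ∑ x ∈ M.filter (fun x => x i = j), c x = 0)
    (x₀ : Fin d → Fin n) (hx₀ : x₀ ∈ M) (h0 : c x₀ = 0) :
    ∀ x ∈ M, c x = 0 := by
  set K := M.filter (fun x => c x ≠ 0) with hKdef
  have hKM : K ⊂ M := by
    refine Finset.ssubset_iff_of_subset (Finset.filter_subset _ _) |>.mpr ⟨x₀, hx₀, ?_⟩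
    simp [hKdef, h0]
  have hKb := hmin K hKM
  have hcK : ∀ (i : Fin d) (j : Fin n), ∑ x ∈ K.filter (fun x => x i = j), c x = 0 := by
    intro i j
    rw [hKdef, Finset.filter_comm, Finset.sum_filter_ne_zero]
    exact hc i j
  intro x hx
  by_contra h
  exact h (basic_no_annih K hKb c hcK x (Finset.mem_filter.mpr ⟨hx, h⟩))

/-- If `M ⊆ [n]^d` is a minimal non-basic subset, then its annihilation function is unique
up to a multiplicative constant: any two non-trivial (rational-valued) annihilation
functions of `M` are proportional. -/
theorem annihilation_unique_of_minimal {n d : ℕ} (M : Finset (Fin d → Fin n))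
    (hnb : ¬ IsBasic M)
    (hmin : ∀ K ⊂ M, IsBasic K)
    (c₁ c₂ : (Fin d → Fin n) → ℚ)
    (h₁ : ∀ (i : Fin d) (j : Fin n), ∑ x ∈ M.filter (fun x => x i = j), c₁ x = 0)
    (h₂ : ∀ (i : Fin d) (j : Fin n), ∑ x ∈ M.filter (fun x => x i = j), c₂ x = 0)
    (hnt₁ : ∃ x ∈ M, c₁ x ≠ 0)
    (hnt₂ : ∃ x ∈ M, c₂ x ≠ 0) :
    ∃ q : ℚ, q ≠ 0 ∧ ∀ x ∈ M, c₂ x = q * c₁ x := by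
  obtain ⟨x₀, hx₀, h1⟩ := hnt₁
  have hc2x₀ : c₂ x₀ ≠ 0 := by
    intro h0
    obtain ⟨y, hy, hy2⟩ := hnt₂
    exact hy2 (annih_zero_of_vanish M hmin c₂ h₂ x₀ hx₀ h0 y hy)
  refine ⟨c₂ x₀ / c₁ x₀, div_ne_zero hc2x₀ h1, ?_⟩
  set q := c₂ x₀ / c₁ x₀ with hq
  have hc : ∀ (i : Fin d) (j : Fin n),
      ∑ x ∈ M.filter (fun x => x i = j), (c₂ x - q * c₁ x) = 0 := by
    intro i j
    rw [Finset.sum_sub_distrib, ← Finset.mul_sum, h₁, h₂, mul_zero, sub_zero]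
  have h0 : c₂ x₀ - q * c₁ x₀ = 0 := by
    rw [hq]; field_simp; ring
  have := annih_zero_of_vanish M hmin (fun x => c₂ x - q * c₁ x) hc x₀ hx₀ h0
  intro x hx
  have hx2 : c₂ x - q * c₁ x = 0 := this x hx
  linarith
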